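/- Let C be a positive diagonal matrix, B any N×N matrix, G energy-preserving and locally Lipschitz, and F : R → R^N continuous. Then for any x₀, the solution of ẋ = C G(x) − Bx + F(t), x(0) = x₀, exists globally on R (i.e. cannot blow up in finite time). -/

import Mathlib

open Set Metric Real Finset Filter
open scoped NNReal Topology

section Aux


variable {E : Type*} [NormedAddCommGroup E] [NormedSpace ℝ E]

noncomputable def radProj (R : ℝ) (x : E) : E := (R / max R ‖x‖) • x

lemma radProj_eq_self {R : ℝ} (hR : 0 < R) {x : E} (h : ‖x‖ ≤ R) : radProj R x = x := by
  simp [radProj, max_eq_left h, div_self hR.ne']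

lemma norm_radProj_le {R : ℝ} (hR : 0 < R) (x : E) : ‖radProj R x‖ ≤ R := by
  have hm : 0 < max R ‖x‖ := lt_max_of_lt_left hR
  have h1 : ‖radProj R x‖ = (R / max R ‖x‖) * ‖x‖ := by
    rw [radProj, norm_smul, Real.norm_eq_abs, abs_of_nonneg (by positivity)]
  rw [h1]
  calc (R / max R ‖x‖) * ‖x‖ ≤ (R / max R ‖x‖) * (max R ‖x‖) := by
        apply mul_le_mul_of_nonneg_left (le_max_right _ _) (by positivity)
    _ = R := by field_simp

lemma radProj_lipschitz {R : ℝ} (hR : 0 < R) : LipschitzWith 2 (radProj (E := E) R) := by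
  apply LipschitzWith.of_dist_le_mul
  intro x y
  set mx := max R ‖x‖ with hmx
  set my := max R ‖y‖ with hmy
  have hmx0 : 0 < mx := lt_max_of_lt_left hR
  have hmy0 : 0 < my := lt_max_of_lt_left hR
  have hkey : radProj R x - radProj R y = (R / (mx * my)) • (my • x - mx • y) := by
    rw [radProj, radProj, smul_sub, smul_smul, smul_smul]
    congr 1
    · congr 1; field_simp; ring
    · congr 1; field_simp; ring
  have hd : dist (radProj R x) (radProj R y) = ‖radProj R x - radProj R y‖ := dist_eq_norm _ _
  rw [hd, hkey, norm_smul, Real.norm_eq_abs, abs_of_nonneg (by positivity)]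
  have habs : |my - mx| ≤ ‖x - y‖ := by
    rw [abs_sub_comm, hmx, hmy, max_comm R ‖x‖, max_comm R ‖y‖]
    have h1 : |‖x‖ ⊔ R - ‖y‖ ⊔ R| ≤ |‖x‖ - ‖y‖| := abs_max_sub_max_le_abs _ _ _
    exact h1.trans (abs_norm_sub_norm_le x y)
  have h2 : ‖my • x - mx • y‖ ≤ 2 * my * ‖x - y‖ := by
    have heq : my • x - mx • y = my • (x - y) + (my - mx) • y := by
      rw [smul_sub, sub_smul]; abel
    rw [heq]
    calc ‖my • (x - y) + (my - mx) • y‖ ≤ ‖my • (x - y)‖ + ‖(my - mx) • y‖ := norm_add_le _ _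
      _ = my * ‖x - y‖ + |my - mx| * ‖y‖ := by
          rw [norm_smul, norm_smul, Real.norm_eq_abs, Real.norm_eq_abs,
            abs_of_nonneg hmy0.le]
      _ ≤ my * ‖x - y‖ + ‖x - y‖ * my := by
          gcongr
          exact le_max_right _ _
      _ = 2 * my * ‖x - y‖ := by ring
  rw [dist_eq_norm]
  push_cast
  calc R / (mx * my) * ‖my • x - mx • y‖ ≤ R / (mx * my) * (2 * my * ‖x - y‖) := by
        apply mul_le_mul_of_nonneg_left h2 (by positivity)
    _ = 2 * ((R / mx) * ‖x - y‖) := by field_simp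
    _ ≤ 2 * (1 * ‖x - y‖) := by
        gcongr
        rw [div_le_one hmx0]
        exact le_max_left _ _
    _ = 2 * ‖x - y‖ := by ring


lemma exists_lipschitzOnWith_of_isCompact {α β : Type*} [MetricSpace α] [MetricSpace β]
    {f : α → β} (hf : LocallyLipschitz f) {s : Set α} (hs : IsCompact s) :
    ∃ K : ℝ≥0, LipschitzOnWith K f s := by
  rcases s.eq_empty_or_nonempty with rfl | hsne
  · exact ⟨1, by simp⟩
  -- local data
  have hcont := hf.continuous
  choose Kl tl htl hlip using hf
  choose rl hrl hball using fun x => Metric.mem_nhds_iff.1 (htl x)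
  -- cover
  obtain ⟨T, hTsub, hTcover⟩ := hs.elim_nhds_subcover (fun x => ball x (rl x / 2))
    (fun x _ => ball_mem_nhds x (half_pos (hrl x)))
  have hTne : T.Nonempty := by
    rcases hsne with ⟨a, ha⟩
    rcases mem_iUnion₂.1 (hTcover ha) with ⟨i, hi, _⟩
    exact ⟨i, hi⟩
  set r0 : ℝ := T.inf' hTne (fun x => rl x / 2) with hr0def
  have hr0pos : 0 < r0 := by
    rw [hr0def, Finset.lt_inf'_iff]
    intro x _; exact half_pos (hrl x)
  -- bound on image
  obtain ⟨D, hD⟩ := Metric.isBounded_iff.1 (hs.image hcont).isBounded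
  have hD0 : 0 ≤ D := by
    rcases hsne with ⟨a, ha⟩
    have := hD (mem_image_of_mem f ha) (mem_image_of_mem f ha)
    simpa using this
  set K1 : ℝ := T.sup' hTne (fun x => (Kl x : ℝ)) with hK1def
  have hK10 : 0 ≤ K1 := by
    rcases hTne with ⟨a, ha⟩
    exact le_trans (Kl a).coe_nonneg (Finset.le_sup' (fun x => ((Kl x : ℝ))) ha)
  set Kr : ℝ := max K1 (D / r0) with hKrdef
  have hKr0 : 0 ≤ Kr := le_trans hK10 (le_max_left _ _)
  refine ⟨Kr.toNNReal, LipschitzOnWith.of_dist_le_mul fun x hx y hy => ?_⟩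
  rw [Real.coe_toNNReal _ hKr0]
  rcases mem_iUnion₂.1 (hTcover hx) with ⟨i, hiT, hxi⟩
  rcases lt_or_ge (dist x y) (rl i / 2) with hclose | hfar
  · -- both in ball i (rl i) ⊆ tl i
    have hxt : x ∈ tl i := hball i (mem_ball.2 (lt_of_lt_of_le (mem_ball.1 hxi) (by linarith [hrl i])))
    have hyt : y ∈ tl i := by
      apply hball i
      rw [mem_ball]
      calc dist y i ≤ dist y x + dist x i := dist_triangle _ _ _
        _ < rl i / 2 + rl i / 2 := by rw [dist_comm y x]; exact add_lt_add hclose (mem_ball.1 hxi)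
        _ = rl i := by ring
    calc dist (f x) (f y) ≤ (Kl i : ℝ) * dist x y :=
          (hlip i).dist_le_mul x hxt y hyt
      _ ≤ K1 * dist x y := by
          apply mul_le_mul_of_nonneg_right _ dist_nonneg
          exact Finset.le_sup' (fun x => ((Kl x : ℝ))) hiT
      _ ≤ Kr * dist x y := by
          apply mul_le_mul_of_nonneg_right (le_max_left _ _) dist_nonneg
  · have hr0le : r0 ≤ dist x y := le_trans (Finset.inf'_le _ hiT) hfar
    calc dist (f x) (f y) ≤ D := hD (mem_image_of_mem f hx) (mem_image_of_mem f hy)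
      _ = (D / r0) * r0 := by field_simp
      _ ≤ (D / r0) * dist x y := by
          apply mul_le_mul_of_nonneg_left hr0le (by positivity)
      _ ≤ Kr * dist x y := mul_le_mul_of_nonneg_right (le_max_right _ _) dist_nonneg


lemma gronwallBound_mono' {δ K ε x y : ℝ} (hδ : 0 ≤ δ) (hK : 0 < K) (hε : 0 ≤ ε)
    (h : x ≤ y) : gronwallBound δ K ε x ≤ gronwallBound δ K ε y := by
  rw [gronwallBound_of_K_ne_0 hK.ne']
  dsimp only
  have h1 : Real.exp (K * x) ≤ Real.exp (K * y) := by
    apply Real.exp_le_exp.2; nlinarith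
  have h2 : 0 ≤ ε / K := by positivity
  nlinarith

lemma gronwallBound_nonneg {δ K ε x : ℝ} (hδ : 0 ≤ δ) (hK : 0 < K) (hε : 0 ≤ ε)
    (hx : 0 ≤ x) : 0 ≤ gronwallBound δ K ε x := by
  calc (0:ℝ) ≤ δ := hδ
    _ = gronwallBound δ K ε 0 := (gronwallBound_x0 δ K ε).symm
    _ ≤ gronwallBound δ K ε x := gronwallBound_mono' hδ hK hε hx

/-- Energy estimate via Grönwall. -/
lemma energy_gronwall {ι : Type*} [Fintype ι] (c : ι → ℝ) (hc : ∀ i, 0 < c i)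
    {y d : ℝ → ι → ℝ} {T K ε δ : ℝ} (hK : 0 < K) (hε : 0 ≤ ε)
    (hy : ContinuousOn y (Icc 0 T))
    (hd : ∀ t ∈ Ico 0 T, HasDerivWithinAt y (d t) (Ici t) t)
    (hbound : ∀ t ∈ Ico 0 T,
      |∑ i, 2 * y t i * d t i / c i| ≤ K * (∑ i, (y t i) ^ 2 / c i) + ε)
    (hδ : ∑ i, (y 0 i) ^ 2 / c i ≤ δ) :
    ∀ t ∈ Icc 0 T, ∑ i, (y t i) ^ 2 / c i ≤ gronwallBound δ K ε T := by
  have hδ0 : 0 ≤ δ := le_trans (Finset.sum_nonneg fun i _ => div_nonneg (sq_nonneg _) (hc i).le) hδ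
  set En : ℝ → ℝ := fun t => ∑ i, (y t i) ^ 2 / c i with hEn
  have hEnn : ∀ t, 0 ≤ En t := fun t => Finset.sum_nonneg fun i _ => div_nonneg (sq_nonneg _) (hc i).le
  have hEcont : ContinuousOn En (Icc 0 T) := by
    apply continuousOn_finset_sum
    intro i _
    exact (((continuous_apply i).comp_continuousOn hy).pow 2).div_const _
  have hEderiv : ∀ t ∈ Ico 0 T,
      HasDerivWithinAt En (∑ i, 2 * y t i * d t i / c i) (Ici t) t := by
    intro t ht
    apply HasDerivWithinAt.fun_sum
    intro i _
    have h1 : HasDerivWithinAt (fun s => y s i) (d t i) (Ici t) t :=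
      hasDerivWithinAt_pi.1 (hd t ht) i
    have h2 : HasDerivWithinAt (fun s => (y s i) ^ 2) (2 * y t i * d t i) (Ici t) t := by
      have := h1.fun_pow 2
      simpa [mul_comm, mul_assoc, mul_left_comm] using this
    exact h2.div_const _
  have key := norm_le_gronwallBound_of_norm_deriv_right_le (f := En)
    (f' := fun t => ∑ i, 2 * y t i * d t i / c i) (δ := δ) (K := K) (ε := ε) (a := 0) (b := T)
    hEcont hEderiv (by rw [Real.norm_eq_abs, abs_of_nonneg (hEnn 0)]; exact hδ)
    (fun x hx => by
      rw [Real.norm_eq_abs, Real.norm_eq_abs, abs_of_nonneg (hEnn x)]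
      exact hbound x hx)
  intro t ht
  have h1 := key t ht
  rw [Real.norm_eq_abs, abs_of_nonneg (hEnn t)] at h1
  calc En t ≤ gronwallBound δ K ε (t - 0) := h1
    _ ≤ gronwallBound δ K ε T := gronwallBound_mono' hδ0 hK hε (by linarith [ht.2])


lemma sum_est {ι : Type*} [Fintype ι] (c : ι → ℝ) (hc : ∀ i, 0 < c i)
    {cmin cmax M Fm lam : ℝ}
    (hcmin : ∀ i, cmin ≤ c i) (hcmin0 : 0 < cmin) (hcmax : ∀ i, c i ≤ cmax)
    (Bm : ι → ι → ℝ) (hM : ∀ i j, |Bm i j| ≤ M) (hM0 : 0 ≤ M)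
    (hFm : 0 ≤ Fm)
    (y g w : ι → ℝ) (hw : ∀ i, |w i| ≤ Fm)
    (hg : ∑ i, y i * g i = 0)
    (hlam0 : 0 ≤ lam) (hlam1 : lam ≤ 1) :
    |∑ i, 2 * y i * (c i * g i - (∑ j, Bm i j * (lam * y j)) + w i) / c i|
      ≤ ((2 * M * (Fintype.card ι : ℝ) + 1) * cmax / cmin) * (∑ i, (y i) ^ 2 / c i)
        + (Fintype.card ι : ℝ) * Fm ^ 2 / cmin := by
  classical
  set n : ℝ := (Fintype.card ι : ℝ) with hn
  have hn0 : 0 ≤ n := Nat.cast_nonneg _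
  set Q : ℝ := ∑ i, (y i) ^ 2 with hQ
  set Ef : ℝ := ∑ i, (y i) ^ 2 / c i with hEf
  have hQ0 : 0 ≤ Q := Finset.sum_nonneg fun i _ => sq_nonneg _
  have hEf0 : 0 ≤ Ef := Finset.sum_nonneg fun i _ => div_nonneg (sq_nonneg _) (hc i).le
  have hQle : Q ≤ cmax * Ef := by
    rw [hQ, hEf, Finset.mul_sum]
    apply Finset.sum_le_sum
    intro i _
    have h1 : (y i) ^ 2 / c i * c i = (y i) ^ 2 := div_mul_cancel₀ _ (hc i).ne'
    nlinarith [div_nonneg (sq_nonneg (y i)) (hc i).le, hcmax i, hc i]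
  have hsplit : ∀ i ∈ Finset.univ (α := ι), 2 * y i * (c i * g i - (∑ j, Bm i j * (lam * y j)) + w i) / c i
      = 2 * (y i * g i) + 2 * y i * (w i - (∑ j, Bm i j * (lam * y j))) / c i := by
    intro i _
    have hne := (hc i).ne'
    generalize (∑ j, Bm i j * (lam * y j)) = S
    field_simp
    ring
  rw [Finset.sum_congr rfl hsplit, Finset.sum_add_distrib, ← Finset.mul_sum, hg, mul_zero,
    zero_add]
  have hpoint : ∀ i ∈ Finset.univ (α := ι), |2 * y i * (w i - (∑ j, Bm i j * (lam * y j))) / c i|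
      ≤ ((y i) ^ 2 + Fm ^ 2 + M * (n * (y i) ^ 2 + Q)) / cmin := by
    intro i _
    have hci := hc i
    have hS0 : 0 ≤ ∑ j, |y j| := Finset.sum_nonneg fun j _ => abs_nonneg _
    have hB : |∑ j, Bm i j * (lam * y j)| ≤ M * ∑ j, |y j| := by
      calc |∑ j, Bm i j * (lam * y j)| ≤ ∑ j, |Bm i j * (lam * y j)| :=
            Finset.abs_sum_le_sum_abs _ _
        _ ≤ ∑ j, M * |y j| := by
            apply Finset.sum_le_sum; intro j _
            rw [abs_mul, abs_mul, abs_of_nonneg hlam0]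
            nlinarith [hM i j, abs_nonneg (Bm i j), abs_nonneg (y j),
              mul_nonneg (sub_nonneg.2 (hM i j)) (abs_nonneg (y j)),
              mul_nonneg (mul_nonneg (abs_nonneg (Bm i j)) (sub_nonneg.2 hlam1))
                (abs_nonneg (y j))]
        _ = M * ∑ j, |y j| := (Finset.mul_sum _ _ _).symm
    have h2S : 2 * |y i| * (M * ∑ j, |y j|) ≤ M * (n * (y i) ^ 2 + Q) := by
      have h1 : 2 * |y i| * ∑ j, |y j| ≤ n * (y i) ^ 2 + Q := by
        calc 2 * |y i| * ∑ j, |y j| = ∑ j, 2 * |y i| * |y j| := by rw [Finset.mul_sum]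
          _ ≤ ∑ j, ((y i) ^ 2 + (y j) ^ 2) := by
              apply Finset.sum_le_sum; intro j _
              nlinarith [sq_nonneg (|y i| - |y j|), sq_abs (y i), sq_abs (y j)]
          _ = n * (y i) ^ 2 + Q := by
              rw [Finset.sum_add_distrib, Finset.sum_const, Finset.card_univ, nsmul_eq_mul, hQ]
        
      nlinarith [abs_nonneg (y i)]
    have habs : |2 * y i * (w i - ∑ j, Bm i j * (lam * y j))|
        ≤ (y i) ^ 2 + Fm ^ 2 + M * (n * (y i) ^ 2 + Q) := by
      have h3 : |2 * y i * (w i - ∑ j, Bm i j * (lam * y j))|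
          = 2 * |y i| * |w i - ∑ j, Bm i j * (lam * y j)| := by
        rw [abs_mul, abs_mul]; norm_num
      rw [h3]
      have h4 : |w i - ∑ j, Bm i j * (lam * y j)| ≤ Fm + M * ∑ j, |y j| :=
        (abs_sub _ _).trans (add_le_add (hw i) hB)
      have h5 : 2 * |y i| * Fm ≤ (y i) ^ 2 + Fm ^ 2 := by
        nlinarith [sq_nonneg (|y i| - Fm), sq_abs (y i)]
      nlinarith [abs_nonneg (y i), abs_nonneg (w i - ∑ j, Bm i j * (lam * y j))]
    rw [abs_div, abs_of_pos hci]
    calc |2 * y i * (w i - ∑ j, Bm i j * (lam * y j))| / c i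
        ≤ |2 * y i * (w i - ∑ j, Bm i j * (lam * y j))| / cmin := by
          apply div_le_div_of_nonneg_left (abs_nonneg _) hcmin0 (hcmin i)
      _ ≤ ((y i) ^ 2 + Fm ^ 2 + M * (n * (y i) ^ 2 + Q)) / cmin :=
          (div_le_div_iff_of_pos_right hcmin0).2 habs
  calc |∑ i, 2 * y i * (w i - (∑ j, Bm i j * (lam * y j))) / c i|
      ≤ ∑ i, |2 * y i * (w i - (∑ j, Bm i j * (lam * y j))) / c i| :=
        Finset.abs_sum_le_sum_abs _ _
    _ ≤ ∑ i, ((y i) ^ 2 + Fm ^ 2 + M * (n * (y i) ^ 2 + Q)) / cmin :=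
        Finset.sum_le_sum hpoint
    _ = (Q + n * Fm ^ 2 + M * (n * Q + n * Q)) / cmin := by
        rw [← Finset.sum_div]
        congr 1
        simp only [Finset.sum_add_distrib, Finset.sum_const, Finset.card_univ, nsmul_eq_mul,
          ← Finset.mul_sum]
        try ring
    _ ≤ ((2 * M * n + 1) * cmax / cmin) * Ef + n * Fm ^ 2 / cmin := by
        have hmul : (2 * M * n + 1) * Q ≤ (2 * M * n + 1) * (cmax * Ef) := by
          apply mul_le_mul_of_nonneg_left hQle
          nlinarith
        rw [div_mul_eq_mul_div, ← add_div]
        apply (div_le_div_iff_of_pos_right hcmin0).2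
        nlinarith [hmul]

/-- Lipschitz property of the assembled vector field. -/
lemma field_lip {ι : Type*} [Fintype ι] (c : ι → ℝ) {cmax M : ℝ}
    (hcmax : ∀ i, |c i| ≤ cmax) (hcmax0 : 0 ≤ cmax)
    (Bm : ι → ι → ℝ) (hM : ∀ i j, |Bm i j| ≤ M) (hM0 : 0 ≤ M)
    {g p : (ι → ℝ) → ι → ℝ} {Kg Kp : ℝ≥0} {s : Set (ι → ℝ)}
    (hg : LipschitzOnWith Kg g s) (hp : LipschitzOnWith Kp p s) (w : ι → ℝ) :
    LipschitzOnWith (Real.toNNReal (cmax * Kg + (Fintype.card ι : ℝ) * (M * Kp)))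
      (fun x i => c i * g x i - (∑ j, Bm i j * p x j) + w i) s := by
  apply LipschitzOnWith.of_dist_le_mul
  intro x hx y hy
  set L : ℝ := cmax * Kg + (Fintype.card ι : ℝ) * (M * Kp) with hL
  have hL0 : 0 ≤ L := by positivity
  have hcoe : (Real.toNNReal L : ℝ) = L := Real.coe_toNNReal _ hL0
  rw [hcoe]
  have hgd : dist (g x) (g y) ≤ (Kg : ℝ) * dist x y := hg.dist_le_mul x hx y hy
  have hpd : dist (p x) (p y) ≤ (Kp : ℝ) * dist x y := hp.dist_le_mul x hx y hy
  apply (dist_pi_le_iff (by positivity)).2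
  intro i
  rw [Real.dist_eq]
  have h1 : c i * g x i - (∑ j, Bm i j * p x j) + w i -
      (c i * g y i - (∑ j, Bm i j * p y j) + w i)
      = c i * (g x i - g y i) - ∑ j, Bm i j * (p x j - p y j) := by
    have e1 : ∑ j, Bm i j * (p x j - p y j)
        = (∑ j, Bm i j * p x j) - ∑ j, Bm i j * p y j := by
      rw [← Finset.sum_sub_distrib]
      exact Finset.sum_congr rfl fun j _ => by ring
    rw [e1]
    ring
  rw [h1]
  have h2 : |c i * (g x i - g y i)| ≤ cmax * ((Kg : ℝ) * dist x y) := by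
    rw [abs_mul]
    apply mul_le_mul (hcmax i) _ (abs_nonneg _) hcmax0
    calc |g x i - g y i| = dist (g x i) (g y i) := (Real.dist_eq _ _).symm
      _ ≤ dist (g x) (g y) := dist_le_pi_dist _ _ _
      _ ≤ (Kg : ℝ) * dist x y := hgd
  have h3 : |∑ j, Bm i j * (p x j - p y j)|
      ≤ (Fintype.card ι : ℝ) * (M * ((Kp : ℝ) * dist x y)) := by
    calc |∑ j, Bm i j * (p x j - p y j)| ≤ ∑ j, |Bm i j * (p x j - p y j)| :=
          Finset.abs_sum_le_sum_abs _ _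
      _ ≤ ∑ _j : ι, M * ((Kp : ℝ) * dist x y) := by
          apply Finset.sum_le_sum
          intro j _
          rw [abs_mul]
          apply mul_le_mul (hM i j) _ (abs_nonneg _) hM0
          calc |p x j - p y j| = dist (p x j) (p y j) := (Real.dist_eq _ _).symm
            _ ≤ dist (p x) (p y) := dist_le_pi_dist _ _ _
            _ ≤ (Kp : ℝ) * dist x y := hpd
      _ = (Fintype.card ι : ℝ) * (M * ((Kp : ℝ) * dist x y)) := by
          rw [Finset.sum_const, Finset.card_univ, nsmul_eq_mul]
  calc |c i * (g x i - g y i) - ∑ j, Bm i j * (p x j - p y j)|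
      ≤ |c i * (g x i - g y i)| + |∑ j, Bm i j * (p x j - p y j)| := abs_sub _ _
    _ ≤ cmax * ((Kg : ℝ) * dist x y) + (Fintype.card ι : ℝ) * (M * ((Kp : ℝ) * dist x y)) :=
        add_le_add h2 h3
    _ = L * dist x y := by rw [hL]; ring

end Aux
/-- Global existence for the time-dependent problem `ẋ = C G(x) - Bx + F(t)`:
`C` positive diagonal, `B` an arbitrary matrix, `G` locally Lipschitz and
energy-preserving, `F` continuous.  For every initial state `x₀` there is a global
solution on all of `ℝ` with `x(0) = x₀`. -/
theorem global_existence (N : ℕ) [NeZero N]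
    (c : ZMod N → ℝ) (hc : ∀ i, 0 < c i)
    (Bm : Matrix (ZMod N) (ZMod N) ℝ)
    (G : (ZMod N → ℝ) → ZMod N → ℝ)
    (hGlip : LocallyLipschitz G)
    (hGe : ∀ x : ZMod N → ℝ, ∑ i : ZMod N, x i * G x i = 0)
    (F : ℝ → ZMod N → ℝ) (hF : Continuous F)
    (x₀ : ZMod N → ℝ) :
    ∃ x : ℝ → ZMod N → ℝ, x 0 = x₀ ∧
      ∀ (t : ℝ) (i : ZMod N),
        HasDerivAt (fun s => x s i)
          (c i * G (x t) i - (∑ j : ZMod N, Bm i j * x t j) + F t i) t := by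
  classical
  have hNe : Nonempty (ZMod N) := ⟨0⟩
  set v : ℝ → (ZMod N → ℝ) → (ZMod N → ℝ) :=
    fun t x i => c i * G x i - (∑ j, Bm i j * x j) + F t i with hvdef
  -- global constants
  obtain ⟨imin, -, hcminle⟩ := Finset.exists_min_image Finset.univ c ⟨0, Finset.mem_univ 0⟩
  obtain ⟨imax, -, hcmaxle⟩ := Finset.exists_max_image Finset.univ c ⟨0, Finset.mem_univ 0⟩
  set cmin := c imin with hcmindef
  set cmax := c imax with hcmaxdef
  have hcmin0 : 0 < cmin := hc imin
  have hcmax0 : 0 < cmax := hc imax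
  have hcmin : ∀ i, cmin ≤ c i := fun i => hcminle i (Finset.mem_univ i)
  have hcmax : ∀ i, c i ≤ cmax := fun i => hcmaxle i (Finset.mem_univ i)
  have hcmaxabs : ∀ i, |c i| ≤ cmax := fun i => by
    rw [abs_of_pos (hc i)]; exact hcmax i
  set M : ℝ := ∑ i, ∑ j, |Bm i j| with hMdef
  have hM0 : 0 ≤ M := Finset.sum_nonneg fun i _ =>
    Finset.sum_nonneg fun j _ => abs_nonneg _
  have hM : ∀ i j, |Bm i j| ≤ M := by
    intro i j
    calc |Bm i j| ≤ ∑ j', |Bm i j'| :=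
          Finset.single_le_sum (f := fun j' => |Bm i j'|) (fun _ _ => abs_nonneg _)
            (Finset.mem_univ j)
      _ ≤ M := Finset.single_le_sum (f := fun i' => ∑ j', |Bm i' j'|)
          (fun i' _ => Finset.sum_nonneg fun j' _ => abs_nonneg _) (Finset.mem_univ i)
  set n : ℝ := (Fintype.card (ZMod N) : ℝ) with hndef
  have hn1 : (1 : ℝ) ≤ n := by
    have := Fintype.card_pos (α := ZMod N)
    rw [hndef]; exact_mod_cast this
  have hn0 : 0 ≤ n := by linarith
  set K : ℝ := (2 * M * n + 1) * cmax / cmin with hKdef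
  have hK : 0 < K := by
    apply div_pos _ hcmin0
    nlinarith [mul_nonneg hM0 hn0]
  set δ : ℝ := ∑ i, (x₀ i) ^ 2 / c i with hδdef
  have hδ0 : 0 ≤ δ := Finset.sum_nonneg fun i _ => div_nonneg (sq_nonneg _) (hc i).le
  -- key existence claim on [-T, T]
  have key : ∀ T : ℝ, 0 < T → ∃ (y : ℝ → ZMod N → ℝ) (ρ : ℝ), 0 ≤ ρ ∧ y 0 = x₀ ∧
      (∀ t ∈ Set.Icc (-T) T, ‖y t‖ ≤ ρ) ∧
      (∀ t ∈ Set.Ioo (-T) T, HasDerivAt y (v t (y t)) t) := by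
    intro T hT
    -- T-dependent constants
    obtain ⟨CF, hCF⟩ := (isCompact_Icc (a := -T) (b := T)).exists_bound_of_continuousOn
      hF.continuousOn
    set Fm : ℝ := max CF 0 with hFmdef
    have hFm0 : 0 ≤ Fm := le_max_right _ _
    have hFmb : ∀ t ∈ Set.Icc (-T) T, ∀ i, |F t i| ≤ Fm := by
      intro t ht i
      calc |F t i| = ‖F t i‖ := (Real.norm_eq_abs _).symm
        _ ≤ ‖F t‖ := norm_le_pi_norm (F t) i
        _ ≤ CF := hCF t ht
        _ ≤ Fm := le_max_left _ _
    set ε : ℝ := n * Fm ^ 2 / cmin with hεdef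
    have hε0 : 0 ≤ ε := by positivity
    set gb : ℝ := gronwallBound δ K ε T with hgbdef
    have hgb0 : 0 ≤ gb := gronwallBound_nonneg hδ0 hK hε0 hT.le
    set ρ : ℝ := Real.sqrt (cmax * gb) with hρdef
    have hρ0 : 0 ≤ ρ := Real.sqrt_nonneg _
    set R : ℝ := ρ + 1 with hRdef
    have hR : 0 < R := by positivity
    obtain ⟨K₁, hK₁⟩ := exists_lipschitzOnWith_of_isCompact hGlip
      (isCompact_closedBall (0 : ZMod N → ℝ) R)
    obtain ⟨CG, hCG⟩ := (isCompact_closedBall (0 : ZMod N → ℝ) R).exists_bound_of_continuousOn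
      hGlip.continuous.continuousOn
    set Gm : ℝ := max CG 0 with hGmdef
    have hGm0 : 0 ≤ Gm := le_max_right _ _
    have hGmb : ∀ z : ZMod N → ℝ, ∀ i, |G (radProj R z) i| ≤ Gm := by
      intro z i
      calc |G (radProj R z) i| = ‖G (radProj R z) i‖ := (Real.norm_eq_abs _).symm
        _ ≤ ‖G (radProj R z)‖ := norm_le_pi_norm _ i
        _ ≤ CG := hCG _ (mem_closedBall_zero_iff.2 (norm_radProj_le hR z))
        _ ≤ Gm := le_max_left _ _
    set vtr : ℝ → (ZMod N → ℝ) → (ZMod N → ℝ) :=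
      fun t x i => c i * G (radProj R x) i - (∑ j, Bm i j * radProj R x j) + F t i with hvtr
    set Cb : ℝ := cmax * Gm + n * (M * R) + Fm with hCbdef
    have hCb0 : 0 ≤ Cb := by positivity
    have hnorm : ∀ t ∈ Set.Icc (-T) T, ∀ x : ZMod N → ℝ, ‖vtr t x‖ ≤ Cb := by
      intro t ht x
      apply (pi_norm_le_iff_of_nonneg hCb0).2
      intro i
      rw [Real.norm_eq_abs]
      have h1 : |c i * G (radProj R x) i| ≤ cmax * Gm := by
        rw [abs_mul]
        exact mul_le_mul (hcmaxabs i) (hGmb x i) (abs_nonneg _) hcmax0.le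
      have h2 : |∑ j, Bm i j * radProj R x j| ≤ n * (M * R) := by
        calc |∑ j, Bm i j * radProj R x j| ≤ ∑ j, |Bm i j * radProj R x j| :=
              Finset.abs_sum_le_sum_abs _ _
          _ ≤ ∑ _j : ZMod N, M * R := by
              apply Finset.sum_le_sum
              intro j _
              rw [abs_mul]
              apply mul_le_mul (hM i j) _ (abs_nonneg _) hM0
              calc |radProj R x j| = ‖radProj R x j‖ := (Real.norm_eq_abs _).symm
                _ ≤ ‖radProj R x‖ := norm_le_pi_norm _ j
                _ ≤ R := norm_radProj_le hR x
          _ = n * (M * R) := by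
              rw [Finset.sum_const, Finset.card_univ, nsmul_eq_mul]
      have h3 : |F t i| ≤ Fm := hFmb t ht i
      calc |c i * G (radProj R x) i - (∑ j, Bm i j * radProj R x j) + F t i|
          ≤ |c i * G (radProj R x) i - (∑ j, Bm i j * radProj R x j)| + |F t i| := abs_add_le _ _
        _ ≤ (|c i * G (radProj R x) i| + |∑ j, Bm i j * radProj R x j|) + |F t i| :=
            add_le_add_left (abs_sub _ _) _
        _ ≤ cmax * Gm + n * (M * R) + Fm := by
            apply add_le_add (add_le_add h1 h2) h3
    have hGrad : LipschitzWith (2 * K₁) (fun x => G (radProj R x)) := by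
      apply LipschitzWith.of_dist_le_mul
      intro x y'
      have hmx := mem_closedBall_zero_iff.2 (norm_radProj_le hR x)
      have hmy := mem_closedBall_zero_iff.2 (norm_radProj_le hR y')
      have h1 := hK₁.dist_le_mul _ hmx _ hmy
      have h2 := (radProj_lipschitz (E := ZMod N → ℝ) hR).dist_le_mul x y'
      push_cast
      push_cast at h2
      calc dist (G (radProj R x)) (G (radProj R y'))
          ≤ (K₁ : ℝ) * dist (radProj R x) (radProj R y') := h1
        _ ≤ (K₁ : ℝ) * (2 * dist x y') :=
            mul_le_mul_of_nonneg_left h2 K₁.coe_nonneg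
        _ = 2 * (K₁ : ℝ) * dist x y' := by ring
    set R' : ℝ := Cb * T + 1 with hR'def
    have hPL : IsPicardLindelof vtr (tmin := -T) (tmax := T) ⟨0, by constructor <;> linarith⟩ x₀
        (Real.toNNReal R') 0 (Real.toNNReal Cb)
        (Real.toNNReal (cmax * ((2 * K₁ : ℝ≥0) : ℝ) + n * (M * ((2 : ℝ≥0) : ℝ)))) := by
      refine ⟨?_, ?_, ?_, ?_⟩
      · intro t _
        exact field_lip c hcmaxabs hcmax0.le Bm hM hM0
          (hGrad.lipschitzOnWith) ((radProj_lipschitz hR).lipschitzOnWith) (F t)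
      · intro x _
        apply Continuous.continuousOn
        apply continuous_pi
        intro i
        exact continuous_const.add ((continuous_apply i).comp hF)
      · intro t ht x _
        rw [Real.coe_toNNReal _ hCb0]
        exact hnorm t ht x
      · rw [Real.coe_toNNReal _ hCb0, Real.coe_toNNReal _ (by positivity)]
        simp only [NNReal.coe_zero, sub_zero, zero_sub, neg_neg, max_self]
        linarith
    obtain ⟨ys, hys0', hys⟩ := hPL.exists_eq_forall_mem_Icc_hasDerivWithinAt₀
    have hys0 : ys 0 = x₀ := hys0'
    have hycont : ContinuousOn ys (Set.Icc (-T) T) := fun t ht =>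
      (hys t ht).continuousWithinAt
    -- helper for the sum estimate
    have hbnd_est : ∀ t ∈ Set.Icc (-T) T, ∀ z : ZMod N → ℝ,
        |∑ i, 2 * z i * vtr t z i / c i| ≤ K * (∑ i, (z i) ^ 2 / c i) + ε := by
      intro t ht z
      set lam : ℝ := R / max R ‖z‖ with hlam
      have hmax0 : 0 < max R ‖z‖ := lt_max_of_lt_left hR
      have hlam0 : 0 ≤ lam := by positivity
      have hlampos : 0 < lam := by positivity
      have hlam1 : lam ≤ 1 := by
        rw [hlam, div_le_one hmax0]
        exact le_max_left _ _
      have hgsum : ∑ i, z i * G (radProj R z) i = 0 := by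
        have h0 := hGe (radProj R z)
        have hz : ∀ i, radProj R z i = lam * z i := fun i => rfl
        calc ∑ i, z i * G (radProj R z) i
            = lam⁻¹ * ∑ i, radProj R z i * G (radProj R z) i := by
              rw [Finset.mul_sum]
              apply Finset.sum_congr rfl
              intro i _
              rw [hz i]
              field_simp
          _ = 0 := by rw [h0, mul_zero]
      have hb1 := sum_est c hc hcmin hcmin0 hcmax (fun i j => Bm i j) hM hM0 hFm0
        z (G (radProj R z)) (F t) (fun i => hFmb t ht i) hgsum hlam0 hlam1
      exact hb1
    -- forward energy estimate
    have hEfwd : ∀ t ∈ Set.Icc 0 T, ∑ i, (ys t i) ^ 2 / c i ≤ gb := by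
      apply energy_gronwall c hc hK hε0
        (hycont.mono (Set.Icc_subset_Icc (by linarith) le_rfl))
      · intro t ht
        have h1 := hys t ⟨by linarith [ht.1], ht.2.le⟩
        apply h1.mono_of_mem_nhdsWithin
        apply Filter.mem_of_superset
          (inter_mem_nhdsWithin (Set.Ici t) (Ioo_mem_nhds (a := -T) (b := T) (by linarith [ht.1]) ht.2))
        rintro u ⟨-, hu2⟩
        exact ⟨hu2.1.le, hu2.2.le⟩
      · intro t ht
        exact hbnd_est t ⟨by linarith [ht.1], ht.2.le⟩ (ys t)
      · rw [hys0]
    -- backward energy estimate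
    have hEbwd : ∀ s ∈ Set.Icc 0 T, ∑ i, (ys (-s) i) ^ 2 / c i ≤ gb := by
      apply energy_gronwall c hc (y := fun s => ys (-s))
        (d := fun s => -(vtr (-s) (ys (-s)))) hK hε0
      · apply hycont.comp continuous_neg.continuousOn
        intro s hs
        have hmem : -s ∈ Set.Icc (-T) T := ⟨by linarith [hs.2], by linarith [hs.1]⟩
        simpa using hmem
      · intro s hs
        have h1 := hys (-s) ⟨by linarith [hs.2], by linarith [hs.1]⟩
        have h2 : HasDerivWithinAt (fun u : ℝ => -u) (-1) (Set.Ici s ∩ Set.Iio T) s :=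
          (hasDerivAt_neg s).hasDerivWithinAt.mono Set.inter_subset_left
        have hmt : Set.MapsTo (fun u : ℝ => -u) (Set.Ici s ∩ Set.Iio T) (Set.Icc (-T) T) := by
          rintro u ⟨hu1, hu2⟩
          have hu1' : s ≤ u := hu1
          have hu2' : u < T := hu2
          have h0 : (0:ℝ) ≤ u := le_trans hs.1 hu1'
          have hmem : -u ∈ Set.Icc (-T) T := ⟨by linarith, by linarith⟩
          simpa using hmem
        have h3 := h1.scomp s h2 hmt
        have h4 : Set.Ici s ∩ Set.Iio T ∈ 𝓝[Set.Ici s] s :=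
          inter_mem_nhdsWithin _ (Iio_mem_nhds hs.2)
        have h5 := h3.mono_of_mem_nhdsWithin h4
        have h6 : (-1 : ℝ) • vtr (-s) (ys (-s)) = -(vtr (-s) (ys (-s))) := by
          rw [neg_one_smul]
        rw [h6] at h5
        exact h5
      · intro s hs
        have hrw : ∀ i ∈ Finset.univ (α := ZMod N),
            2 * ys (-s) i * (-(vtr (-s) (ys (-s)))) i / c i
            = -(2 * ys (-s) i * vtr (-s) (ys (-s)) i / c i) := by
          intro i _
          simp only [Pi.neg_apply]
          ring
        rw [Finset.sum_congr rfl hrw, Finset.sum_neg_distrib, abs_neg]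
        exact hbnd_est (-s) ⟨by linarith [hs.2], by linarith [hs.1]⟩ (ys (-s))
      · rw [neg_zero, hys0]
    have hEall : ∀ t ∈ Set.Icc (-T) T, ∑ i, (ys t i) ^ 2 / c i ≤ gb := by
      intro t ht
      rcases le_or_gt 0 t with h | h
      · exact hEfwd t ⟨h, ht.2⟩
      · have h1 := hEbwd (-t) ⟨by linarith, by linarith [ht.1]⟩
        rwa [neg_neg] at h1
    have hynorm : ∀ t ∈ Set.Icc (-T) T, ‖ys t‖ ≤ ρ := by
      intro t ht
      apply (pi_norm_le_iff_of_nonneg hρ0).2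
      intro i
      rw [Real.norm_eq_abs, ← Real.sqrt_sq_eq_abs, hρdef]
      apply Real.sqrt_le_sqrt
      have h1 : (ys t i) ^ 2 / c i ≤ ∑ j, (ys t j) ^ 2 / c j :=
        Finset.single_le_sum (f := fun j => (ys t j) ^ 2 / c j)
          (fun j _ => div_nonneg (sq_nonneg _) (hc j).le) (Finset.mem_univ i)
      have h2 := hEall t ht
      have h3 : (ys t i) ^ 2 = ((ys t i) ^ 2 / c i) * c i :=
        (div_mul_cancel₀ _ (hc i).ne').symm
      calc (ys t i) ^ 2 = ((ys t i) ^ 2 / c i) * c i := h3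
        _ ≤ gb * cmax := by
            apply mul_le_mul (le_trans h1 h2) (hcmax i) (hc i).le hgb0
        _ = cmax * gb := mul_comm _ _
    have hrad : ∀ t ∈ Set.Icc (-T) T, radProj R (ys t) = ys t := fun t ht =>
      radProj_eq_self hR (le_trans (hynorm t ht) (by rw [hRdef]; linarith))
    refine ⟨ys, ρ, hρ0, hys0, hynorm, ?_⟩
    intro t ht
    have h1 := (hys t (Set.Ioo_subset_Icc_self ht)).hasDerivAt (Icc_mem_nhds ht.1 ht.2)
    have h2 : vtr t (ys t) = v t (ys t) := by
      funext i
      simp only [hvtr, hvdef]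
      rw [hrad t (Set.Ioo_subset_Icc_self ht)]
    rwa [h2] at h1
  -- uniqueness claim
  have uniq : ∀ (T₁ T₂ ρ₁ ρ₂ : ℝ) (y₁ y₂ : ℝ → ZMod N → ℝ), 0 < T₁ → T₁ ≤ T₂ →
      (∀ t ∈ Set.Icc (-T₁) T₁, ‖y₁ t‖ ≤ ρ₁) →
      (∀ t ∈ Set.Ioo (-T₁) T₁, HasDerivAt y₁ (v t (y₁ t)) t) →
      (∀ t ∈ Set.Icc (-T₂) T₂, ‖y₂ t‖ ≤ ρ₂) →
      (∀ t ∈ Set.Ioo (-T₂) T₂, HasDerivAt y₂ (v t (y₂ t)) t) →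
      y₁ 0 = y₂ 0 → Set.EqOn y₁ y₂ (Set.Ioo (-T₁) T₁) := by
    intro T₁ T₂ ρ₁ ρ₂ y₁ y₂ hT₁ hTle hb₁ hd₁ hb₂ hd₂ heq
    set ρ := max ρ₁ ρ₂ with hρdef
    obtain ⟨K₁, hK₁⟩ := exists_lipschitzOnWith_of_isCompact hGlip
      (isCompact_closedBall (0 : ZMod N → ℝ) ρ)
    have hvlip : ∀ t : ℝ, LipschitzOnWith
        (Real.toNNReal (cmax * K₁ + (Fintype.card (ZMod N) : ℝ) * (M * (1 : ℝ≥0))))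
        (v t) (closedBall 0 ρ) := by
      intro t
      exact field_lip c hcmaxabs hcmax0.le Bm hM hM0 hK₁
        (LipschitzWith.id.lipschitzOnWith) (F t)
    have hsub : Set.Ioo (-T₁) T₁ ⊆ Set.Ioo (-T₂) T₂ :=
      Set.Ioo_subset_Ioo (by linarith) hTle
    apply ODE_solution_unique_of_mem_Ioo (fun t _ => hvlip t) (t₀ := 0) ⟨by linarith, hT₁⟩
    · intro t ht
      refine ⟨hd₁ t ht, ?_⟩
      rw [mem_closedBall_zero_iff]
      exact le_trans (hb₁ t (Set.Ioo_subset_Icc_self ht)) (le_max_left _ _)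
    · intro t ht
      refine ⟨hd₂ t (hsub ht), ?_⟩
      rw [mem_closedBall_zero_iff]
      exact le_trans (hb₂ t (Set.Ioo_subset_Icc_self (hsub ht))) (le_max_right _ _)
    · exact heq
  -- family of solutions
  have hfam : ∀ m : ℕ, ∃ (y : ℝ → ZMod N → ℝ) (ρ : ℝ), 0 ≤ ρ ∧ y 0 = x₀ ∧
      (∀ t ∈ Set.Icc (-((m : ℝ) + 1)) ((m : ℝ) + 1), ‖y t‖ ≤ ρ) ∧
      (∀ t ∈ Set.Ioo (-((m : ℝ) + 1)) ((m : ℝ) + 1), HasDerivAt y (v t (y t)) t) :=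
    fun m => key ((m : ℝ) + 1) (by positivity)
  choose y ρs hρ0 hy0 hybnd hyderiv using hfam
  refine ⟨fun t => y ⌊|t|⌋₊ t, ?_, ?_⟩
  · have h0 : ⌊|(0 : ℝ)|⌋₊ = 0 := by norm_num
    simpa [h0] using hy0 0
  · intro t i
    set m := ⌊|t|⌋₊ with hm
    have hmem : t ∈ Set.Ioo (-((m : ℝ) + 1)) ((m : ℝ) + 1) := by
      have h1 : |t| < (m : ℝ) + 1 := by
        rw [hm]; push_cast; exact Nat.lt_floor_add_one _
      constructor
      · linarith [neg_abs_le t]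
      · linarith [le_abs_self t]
    have hagree : ∀ s ∈ Set.Ioo (-((m : ℝ) + 1)) ((m : ℝ) + 1), y ⌊|s|⌋₊ s = y m s := by
      intro s hs
      set k := ⌊|s|⌋₊ with hk
      have hsk : s ∈ Set.Ioo (-((k : ℝ) + 1)) ((k : ℝ) + 1) := by
        have h1 : |s| < (k : ℝ) + 1 := by
          rw [hk]; push_cast; exact Nat.lt_floor_add_one _
        constructor
        · linarith [neg_abs_le s]
        · linarith [le_abs_self s]
      rcases le_total k m with hkm | hkm
      · exact uniq ((k : ℝ) + 1) ((m : ℝ) + 1) _ _ (y k) (y m) (by positivity)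
          (by exact_mod_cast add_le_add_left (Nat.cast_le.2 hkm) 1)
          (hybnd k) (hyderiv k) (hybnd m) (hyderiv m)
          (by rw [hy0 k, hy0 m]) hsk
      · exact (uniq ((m : ℝ) + 1) ((k : ℝ) + 1) _ _ (y m) (y k) (by positivity)
          (by exact_mod_cast add_le_add_left (Nat.cast_le.2 hkm) 1)
          (hybnd m) (hyderiv m) (hybnd k) (hyderiv k)
          (by rw [hy0 k, hy0 m]) hs).symm
    have hd : HasDerivAt (y m) (v t (y m t)) t := hyderiv m t hmem
    have hxev : (fun s => y ⌊|s|⌋₊ s) =ᶠ[𝓝 t] y m :=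
      eventuallyEq_of_mem (Ioo_mem_nhds hmem.1 hmem.2) hagree
    have hd2 : HasDerivAt (fun s => y ⌊|s|⌋₊ s) (v t (y m t)) t :=
      hd.congr_of_eventuallyEq hxev
    exact hasDerivAt_pi.1 hd2 i
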